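/- Let G* be a CPDAG faithful to the distribution over its vertices, and X, Y two distinct vertices. X is a definite non-cause of Y (i.e., X has no directed path to Y in any DAG of the equivalence class [G*]) if and only if the d-separation X ⊥ Y | pa(X, G*) holds in some (equivalently, every) DAG of [G*]. -/

import Mathlib

variable {V : Type*}

/-- A partially directed graph, with directed edges `dir` and undirected edges
`undir`; between two vertices there is at most one edge. -/
structure PDGraph (V : Type*) where
  dir : V → V → Prop
  undir : V → V → Prop
  undir_symm : ∀ {a b}, undir a b → undir b a
  dir_irrefl : ∀ a, ¬ dir a a
  undir_irrefl : ∀ a, ¬ undir a a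
  not_double : ∀ a b, dir a b → ¬ dir b a
  not_mixed : ∀ a b, dir a b → ¬ undir a b

namespace PDGraph

variable (G : PDGraph V)

/-- Two vertices are adjacent if joined by some edge. -/
def adj (a b : V) : Prop := G.dir a b ∨ G.dir b a ∨ G.undir a b

/-- Parents of `x`: vertices with a directed edge into `x`. -/
def pa (x : V) : Set V := {a | G.dir a x}

/-- Children of `x`: vertices with a directed edge from `x`. -/
def ch (x : V) : Set V := {b | G.dir x b}

/-- Siblings (undirected neighbours) of `x`. -/
def sib (x : V) : Set V := {a | G.undir a x}

end PDGraph

/-- A directed-edge relation is a DAG if it has no directed cycle. -/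
def IsDAG (E : V → V → Prop) : Prop := ∀ a, ¬ Relation.TransGen E a a

/-- A v-structure `a → b ← c` in a directed graph, with `a` and `c` non-adjacent. -/
def VStruct (E : V → V → Prop) (a b c : V) : Prop :=
  E a b ∧ E c b ∧ a ≠ c ∧ ¬ E a c ∧ ¬ E c a

/-- The DAG `E` belongs to the Markov equivalence class represented by the
partially directed graph `G`: it is obtained by orienting the undirected edges
of `G` acyclically without creating any new v-structure. -/
def InClass (G : PDGraph V) (E : V → V → Prop) : Prop :=
  IsDAG E ∧
  (∀ a b, G.dir a b → E a b) ∧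
  (∀ a b, G.undir a b → E a b ∨ E b a) ∧
  (∀ a b, E a b → G.adj a b) ∧
  (∀ a b c, VStruct E a b c → G.dir a b ∧ G.dir c b)

/-- `G` is a CPDAG: its class is nonempty, and every undirected edge of `G` is
oriented in both ways among the DAGs of the class (so an edge of `G` is
directed iff it is directed the same way in every DAG of the class). -/
def IsCPDAG (G : PDGraph V) : Prop :=
  (∃ E, InClass G E) ∧ ∀ a b, G.undir a b → ∃ E, InClass G E ∧ E a b

/-- A single step of a partially directed path away from the start. -/
def PDStep (G : PDGraph V) (a b : V) : Prop := G.dir a b ∨ G.undir a b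

/-- `p` is a partially directed path from `x` to `y` in `G`: distinct vertices,
no edge on it points back toward `x`. -/
def IsPDPath (G : PDGraph V) (x y : V) (p : List V) : Prop :=
  p.Nodup ∧ p.Chain' (PDStep G) ∧ p.head? = some x ∧ p.getLast? = some y

/-- A path is chordless in `G` if no two nonconsecutive vertices on it are adjacent. -/
def ChordlessIn (G : PDGraph V) (p : List V) : Prop :=
  ∀ (i j : ℕ) (hi : i < p.length) (hj : j < p.length),
    i + 1 < j → ¬ G.adj (p.get ⟨i, hi⟩) (p.get ⟨j, hj⟩)

/-- The critical set of `x` with respect to `y`: the vertices adjacent to `x`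
lying on (i.e. directly following `x` on) some chordless partially directed
path from `x` to `y`. -/
def criticalSet (G : PDGraph V) (x y : V) : Set V :=
  {c | ∃ p, IsPDPath G x y p ∧ ChordlessIn G p ∧ p[1]? = some c}

/-- One step along a path in the skeleton of the directed graph `E`. -/
def SkelStep (E : V → V → Prop) (a b : V) : Prop := E a b ∨ E b a

/-- The middle vertex `b` of a consecutive triple on a path is active given `Z`:
if it is a collider then it has a descendant in `Z`, otherwise it is not in `Z`. -/
def ActiveTriple (E : V → V → Prop) (Z : Set V) (a b c : V) : Prop :=
  (E a b ∧ E c b → ∃ d ∈ Z, Relation.ReflTransGen E b d) ∧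
  (¬ (E a b ∧ E c b) → b ∉ Z)

/-- `x` and `y` are d-connected given `Z` in the DAG `E`: neither endpoint is in
`Z` and there is a path between them on which every intermediate vertex is active. -/
def DConn (E : V → V → Prop) (Z : Set V) (x y : V) : Prop :=
  x ∉ Z ∧ y ∉ Z ∧ ∃ p : List V, p.Nodup ∧ p.Chain' (SkelStep E) ∧
    p.head? = some x ∧ p.getLast? = some y ∧
    ∀ (i : ℕ) (h : i + 2 < p.length),
      ActiveTriple E Z (p.get ⟨i, by omega⟩) (p.get ⟨i + 1, by omega⟩) (p.get ⟨i + 2, h⟩)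

/-- d-separation: `x ⟂ y | Z` in the DAG `E`. -/
def DSep (E : V → V → Prop) (Z : Set V) (x y : V) : Prop := ¬ DConn E Z x y

/-- `x` is an explicit cause of `y`: `G` itself has a directed path from `x` to `y`. -/
def ExplicitCause (G : PDGraph V) (x y : V) : Prop := Relation.TransGen G.dir x y

/-- `x` is a definite cause of `y`: every DAG in the class has a directed path
from `x` to `y`. -/
def DefiniteCause (G : PDGraph V) (x y : V) : Prop :=
  ∀ E, InClass G E → Relation.TransGen E x y

/-- `x` is a definite non-cause of `y`: no DAG in the class has a directed path
from `x` to `y`. -/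
def DefiniteNonCause (G : PDGraph V) (x y : V) : Prop :=
  ∀ E, InClass G E → ¬ Relation.TransGen E x y

/-- `x` is a possible cause of `y`: it is an ancestor of `y` in some but not
all DAGs of the class. -/
def PossibleCause (G : PDGraph V) (x y : V) : Prop :=
  (∃ E, InClass G E ∧ Relation.TransGen E x y) ∧
  (∃ E, InClass G E ∧ ¬ Relation.TransGen E x y)

/-- `x` is an implicit cause of `y`: a definite cause that is not explicit. -/
def ImplicitCause (G : PDGraph V) (x y : V) : Prop :=
  DefiniteCause G x y ∧ ¬ ExplicitCause G x y

/-- `x` and `y` lie in the same chain component of `G`: they are connected by a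
purely undirected path. -/
def SameChainComp (G : PDGraph V) (x y : V) : Prop := Relation.ReflTransGen G.undir x y

/-- A set of vertices pairwise joined by undirected edges. -/
def UClique (G : PDGraph V) (S : Set V) : Prop :=
  ∀ a ∈ S, ∀ b ∈ S, a ≠ b → G.undir a b

/-- `M` is a maximal clique of the induced subgraph of `G` over the siblings of `x`. -/
def MaxCliqueInSib (G : PDGraph V) (x : V) (M : Set V) : Prop :=
  M ⊆ G.sib x ∧ UClique G M ∧
    ∀ M', M' ⊆ G.sib x → UClique G M' → M ⊆ M' → M' = M

/-- `S` induces a complete subgraph of `G`: all its vertices pairwise adjacent. -/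
def CompleteIn (G : PDGraph V) (S : Set V) : Prop :=
  ∀ a ∈ S, ∀ b ∈ S, a ≠ b → G.adj a b


section AuxProof

open Relation

variable {G : PDGraph V} {E : V → V → Prop} {Z : Set V} {x y : V}

namespace Stmt10Aux

/-! ### Basic facts about DAGs and class members -/

lemma dag_irrefl (h : IsDAG E) (a : V) : ¬ E a a := fun ha => h a (TransGen.single ha)

lemma dag_asymm (h : IsDAG E) {a b : V} (hab : E a b) : ¬ E b a :=
  fun hba => h a (TransGen.head hab (TransGen.single hba))

lemma adj_symm {a b : V} (h : G.adj a b) : G.adj b a := by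
  rcases h with h | h | h
  · exact Or.inr (Or.inl h)
  · exact Or.inl h
  · exact Or.inr (Or.inr (G.undir_symm h))

lemma inclass_dag (hE : InClass G E) : IsDAG E := hE.1
lemma inclass_dir (hE : InClass G E) {a b : V} (h : G.dir a b) : E a b := hE.2.1 a b h
lemma inclass_undir (hE : InClass G E) {a b : V} (h : G.undir a b) : E a b ∨ E b a :=
  hE.2.2.1 a b h
lemma inclass_adj (hE : InClass G E) {a b : V} (h : E a b) : G.adj a b := hE.2.2.2.1 a b h
lemma inclass_vs (hE : InClass G E) {a b c : V} (h : VStruct E a b c) :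
    G.dir a b ∧ G.dir c b := hE.2.2.2.2 a b c h

lemma adjE (hE : InClass G E) {a b : V} (h : G.adj a b) : E a b ∨ E b a := by
  rcases h with h | h | h
  · exact Or.inl (inclass_dir hE h)
  · exact Or.inr (inclass_dir hE h)
  · exact inclass_undir hE h

lemma nonadjE (hE : InClass G E) {a b : V} (h : ¬ G.adj a b) : ¬ E a b ∧ ¬ E b a :=
  ⟨fun h' => h (inclass_adj hE h'), fun h' => h (adj_symm (inclass_adj hE h'))⟩

/-- an edge of a class member is, in `G`, either directed the same way or undirected. -/
lemma edge_cases (hE : InClass G E) {a b : V} (h : E a b) :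
    G.dir a b ∨ G.undir a b := by
  rcases inclass_adj hE h with h' | h' | h'
  · exact Or.inl h'
  · exact absurd (inclass_dir hE h') (dag_asymm (inclass_dag hE) h)
  · exact Or.inr h'

/-- Meek-style fact: `a → b — c` with `a,c` distinct non-adjacent is impossible in a
weak CPDAG. -/
lemma W1 (hG : IsCPDAG G) {a b c : V} (hab : G.dir a b) (hbc : G.undir b c)
    (hac : a ≠ c) (hnadj : ¬ G.adj a c) : False := by
  obtain ⟨E', hE', hcb⟩ := hG.2 c b (G.undir_symm hbc)
  have hvs : VStruct E' a b c :=
    ⟨inclass_dir hE' hab, hcb, hac, (nonadjE hE' hnadj).1, (nonadjE hE' hnadj).2⟩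
  exact G.not_mixed c b (inclass_vs hE' hvs).2 (G.undir_symm hbc)

/-! ### chains and TransGen -/

lemma tg_of_chain {u : ℕ → V} {a b : ℕ} (hab : a < b)
    (h : ∀ t, a ≤ t → t < b → E (u t) (u (t + 1))) :
    Relation.TransGen E (u a) (u b) := by
  induction b with
  | zero => omega
  | succ n ih =>
    rcases Nat.lt_or_ge a n with h' | h'
    · exact TransGen.tail (ih h' (fun t ht ht' => h t ht (by omega)))
        (h n (by omega) (by omega))
    · have : a = n := by omega
      subst this
      exact TransGen.single (h a le_rfl (by omega))

lemma tg_of_chain_rev {u : ℕ → V} {a b : ℕ} (hab : a < b)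
    (h : ∀ t, a ≤ t → t < b → E (u (t + 1)) (u t)) :
    Relation.TransGen E (u b) (u a) := by
  induction b with
  | zero => omega
  | succ n ih =>
    rcases Nat.lt_or_ge a n with h' | h'
    · exact TransGen.head (h n (by omega) (by omega))
        (ih h' (fun t ht ht' => h t ht (by omega)))
    · have : a = n := by omega
      subst this
      exact TransGen.single (h a le_rfl (by omega))

lemma chain_of_tg {a b : V} (h : Relation.TransGen E a b) :
    ∃ (n : ℕ) (u : ℕ → V), 1 ≤ n ∧ u 0 = a ∧ u n = b ∧ ∀ t < n, E (u t) (u (t + 1)) := by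
  induction h with
  | @single c h =>
    refine ⟨1, fun t => if t = 0 then a else c, by omega, by simp, by simp, ?_⟩
    intro t ht
    have ht0 : t = 0 := by omega
    subst ht0
    simpa using h
  | @tail c d _ hlast ih =>
    obtain ⟨n, u, hn, h0, hn', hch⟩ := ih
    refine ⟨n + 1, fun t => if t ≤ n then u t else d, by omega, ?_, ?_, ?_⟩
    · have : (0:ℕ) ≤ n := by omega
      simp [this, h0]
    · simp
    · intro t ht
      rcases Nat.lt_or_ge t n with h' | h'
      · have h1 : t ≤ n := by omega
        have h2 : t + 1 ≤ n := by omega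
        simpa [h1, h2] using hch t h'
      · have : t = n := by omega
        subst this
        have h1 : t ≤ t := le_rfl
        have h2 : ¬ (t + 1 ≤ t) := by omega
        simpa [h1, h2, hn'] using hlast

end Stmt10Aux
end AuxProof

section AuxProof2
open Relation
variable {G : PDGraph V} {E : V → V → Prop} {Z : Set V} {x y : V}
namespace Stmt10Aux

/-- A d-connecting path in functional form. -/
structure APath (E : V → V → Prop) (Z : Set V) (x y : V) : Type _ where
  k : ℕ
  u : ℕ → V
  hk : 1 ≤ k
  hx : u 0 = x
  hy : u k = y
  inj : ∀ i ≤ k, ∀ j ≤ k, i ≠ j → u i ≠ u j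
  chain : ∀ t < k, SkelStep E (u t) (u (t + 1))
  act : ∀ t, t + 2 ≤ k → ActiveTriple E Z (u t) (u (t + 1)) (u (t + 2))

lemma getElem_idx_congr (p : List V) {i j : ℕ} (h : i = j) (hi : i < p.length) :
    p[i]'hi = p[j]'(h ▸ hi) := by subst h; rfl

lemma apath_of_dconn (hxy : x ≠ y) (h : DConn E Z x y) :
    x ∉ Z ∧ y ∉ Z ∧ Nonempty (APath E Z x y) := by
  obtain ⟨hxZ, hyZ, p, hnd, hch, hhd, hlt, hact⟩ := h
  refine ⟨hxZ, hyZ, ?_⟩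
  have hpne : p ≠ [] := by rintro rfl; simp at hhd
  have hlen : 1 ≤ p.length := List.length_pos_iff.mpr hpne
  have hhd' : p[0]'(by omega) = x := by
    rw [List.head?_eq_getElem?] at hhd
    rw [List.getElem?_eq_getElem (by omega)] at hhd
    exact Option.some_injective _ hhd
  have hlt' : p[p.length - 1]'(by omega) = y := by
    rw [List.getLast?_eq_getElem?] at hlt
    rw [List.getElem?_eq_getElem (by omega)] at hlt
    exact Option.some_injective _ hlt
  have hk2 : 2 ≤ p.length := by
    rcases Nat.lt_or_ge p.length 2 with h2 | h2
    · exfalso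
      have h0 : p.length - 1 = 0 := by omega
      rw [getElem_idx_congr p h0] at hlt'
      exact hxy (hhd' ▸ hlt' ▸ rfl)
    · exact h2
  refine ⟨⟨p.length - 1, fun i => p.getD i x, by omega, ?_, ?_, ?_, ?_, ?_⟩⟩
  · show p.getD 0 x = x
    rw [List.getD_eq_getElem p x (by omega)]; exact hhd'
  · show p.getD (p.length - 1) x = y
    rw [List.getD_eq_getElem p x (by omega)]; exact hlt'
  · intro i hi j hj hij
    show p.getD i x ≠ p.getD j x
    rw [List.getD_eq_getElem p x (by omega), List.getD_eq_getElem p x (by omega)]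
    intro hcon
    exact hij (List.Nodup.getElem_inj_iff hnd |>.mp hcon)
  · intro t ht
    show SkelStep E (p.getD t x) (p.getD (t+1) x)
    rw [List.getD_eq_getElem p x (by omega), List.getD_eq_getElem p x (by omega)]
    have := List.isChain_iff_getElem.mp hch t (by omega)
    simpa using this
  · intro t ht
    show ActiveTriple E Z (p.getD t x) (p.getD (t+1) x) (p.getD (t+2) x)
    rw [List.getD_eq_getElem p x (by omega), List.getD_eq_getElem p x (by omega),
      List.getD_eq_getElem p x (by omega)]
    have := hact t (by omega)
    simpa using this

lemma dconn_of_apath (hxZ : x ∉ Z) (hyZ : y ∉ Z) (P : APath E Z x y) :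
    DConn E Z x y := by
  refine ⟨hxZ, hyZ, (List.range (P.k + 1)).map P.u, ?_, ?_, ?_, ?_, ?_⟩
  · refine List.Nodup.map_on ?_ List.nodup_range
    intro i hi j hj hij
    by_contra hne
    exact P.inj i (by simpa using Nat.lt_succ_iff.mp (List.mem_range.mp hi))
      j (by simpa using Nat.lt_succ_iff.mp (List.mem_range.mp hj)) hne hij
  · apply List.isChain_iff_getElem.mpr
    intro i hi
    simp only [List.length_map, List.length_range] at hi
    have h1 : i < P.k := by omega
    simp only [List.get_eq_getElem, List.getElem_map, List.getElem_range]
    exact P.chain i h1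
  · have hne : (List.range (P.k + 1)).map P.u ≠ [] := by simp
    rw [List.head?_eq_getElem?, List.getElem?_eq_getElem (by simp)]
    simp [P.hx]
  · rw [List.getLast?_eq_getElem?, List.getElem?_eq_getElem (by simp)]
    simp [P.hy]
  · intro i h
    simp only [List.length_map, List.length_range] at h
    simp only [List.get_eq_getElem, List.getElem_map, List.getElem_range]
    exact P.act i (by omega)

/-! ### helpers on active triples -/

lemma at_noncol (hnc : ¬ (E a b ∧ E c b)) (hbZ : b ∉ Z) : ActiveTriple E Z a b c :=
  ⟨fun h => absurd h hnc, fun _ => hbZ⟩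

lemma at_col (h1 : E a b) (h2 : E c b) {d : V} (hd : d ∈ Z)
    (hrt : Relation.ReflTransGen E b d) : ActiveTriple E Z a b c :=
  ⟨fun _ => ⟨d, hd, hrt⟩, fun h => absurd ⟨h1, h2⟩ h⟩

/-- every vertex on an active path that lies in `Z` is a collider there. -/
lemma z_mem_col (P : APath E Z x y) {t : ℕ} (ht1 : 1 ≤ t) (ht2 : t + 1 ≤ P.k)
    (htZ : P.u t ∈ Z) : E (P.u (t - 1)) (P.u t) ∧ E (P.u (t + 1)) (P.u t) := by
  have h := P.act (t - 1) (by omega)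
  have e1 : t - 1 + 1 = t := by omega
  have e2 : t - 1 + 2 = t + 1 := by omega
  rw [e1, e2] at h
  by_contra hnc
  exact (h.2 hnc) htZ

end Stmt10Aux
end AuxProof2

section AuxProof3
open Relation
variable {G : PDGraph V} {E : V → V → Prop} {Z : Set V} {x y : V}
namespace Stmt10Aux

/-- Shortcut surgery: drop the portion of an active path strictly between positions
`i` and `j`, provided there is an edge between them and the two new triples are active. -/
lemma shortcut (P : APath E Z x y) {i j : ℕ} (hij : i + 2 ≤ j) (hjk : j ≤ P.k)
    (hstep : SkelStep E (P.u i) (P.u j))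
    (hleft : i = 0 ∨ ActiveTriple E Z (P.u (i - 1)) (P.u i) (P.u j))
    (hright : j = P.k ∨ ActiveTriple E Z (P.u i) (P.u j) (P.u (j + 1))) :
    ∃ Q : APath E Z x y, Q.k < P.k := by
  obtain ⟨k, u, hk, hx, hy, inj, chain, act⟩ := P
  simp only at *
  set d := j - i - 1 with hd
  have hd1 : 1 ≤ d := by omega
  set u' : ℕ → V := fun t => if t ≤ i then u t else u (t + d) with hu'
  have hui : ∀ t ≤ i, u' t = u t := by intro t ht; simp [hu', ht]
  have huii : ∀ t, i < t → u' t = u (t + d) := by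
    intro t ht
    have h : ¬ (t ≤ i) := by omega
    simp [hu', h]
  have hj' : u' (i + 1) = u j := by rw [huii (i+1) (by omega)]; congr 1; omega
  refine ⟨⟨k - d, u', by omega, ?_, ?_, ?_, ?_, ?_⟩, by simp only; omega⟩
  · rw [hui 0 (by omega)]; exact hx
  · rw [huii (k - d) (by omega)]
    have : k - d + d = k := by omega
    rw [this]; exact hy
  · intro t1 ht1 t2 ht2 hne
    rcases le_or_gt t1 i with h1 | h1 <;> rcases le_or_gt t2 i with h2 | h2
    · rw [hui t1 h1, hui t2 h2]; exact inj t1 (by omega) t2 (by omega) hne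
    · rw [hui t1 h1, huii t2 h2]; exact inj t1 (by omega) (t2 + d) (by omega) (by omega)
    · rw [huii t1 h1, hui t2 h2]; exact inj (t1 + d) (by omega) t2 (by omega) (by omega)
    · rw [huii t1 h1, huii t2 h2]; exact inj (t1 + d) (by omega) (t2 + d) (by omega) (by omega)
  · intro t ht
    rcases Nat.lt_trichotomy t i with h1 | h1 | h1
    · rw [hui t (by omega), hui (t+1) (by omega)]; exact chain t (by omega)
    · subst h1
      rw [hui t le_rfl, hj']
      exact hstep
    · rw [huii t h1, huii (t+1) (by omega)]
      have : t + d + 1 = t + 1 + d := by omega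
      rw [← this]
      exact chain (t + d) (by omega)
  · intro t ht
    rcases Nat.lt_or_ge (t + 2) (i + 1) with h1 | h1
    · rw [hui t (by omega), hui (t+1) (by omega), hui (t+2) (by omega)]
      exact act t (by omega)
    rcases Nat.eq_or_lt_of_le h1 with h1 | h1
    · -- t + 2 = i + 1, so t = i - 1 and i ≥ 1
      have hi1 : 1 ≤ i := by omega
      have ht' : t = i - 1 := by omega
      rcases hleft with h | h
      · omega
      · rw [hui t (by omega), hui (t+1) (by omega)]
        have e2 : t + 2 = i + 1 := by omega
        rw [e2, hj', ht']
        have e1 : i - 1 + 1 = i := by omega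
        rw [e1]
        exact h
    rcases Nat.eq_or_lt_of_le h1 with h1 | h1
    · -- t + 2 = i + 2, t = i
      have ht' : t = i := by omega
      subst ht'
      rcases hright with h | h
      · omega
      · rw [hui t le_rfl, hj']
        rw [huii (t+2) (by omega)]
        have : t + 2 + d = j + 1 := by omega
        rw [this]
        exact h
    · -- t ≥ i + 1
      rw [huii t (by omega), huii (t+1) (by omega), huii (t+2) (by omega)]
      have e1 : t + 1 + d = t + d + 1 := by omega
      have e2 : t + 2 + d = t + d + 2 := by omega
      rw [e1, e2]
      exact act (t + d) (by omega)

/-- Replacement surgery: replace the vertex at position `c` by a new vertex `w`. -/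
lemma replace_mid (P : APath E Z x y) {c : ℕ} (hc1 : 1 ≤ c) (hck : c + 1 ≤ P.k) (w : V)
    (hwnew : ∀ t ≤ P.k, P.u t ≠ w)
    (hstepl : SkelStep E (P.u (c - 1)) w) (hstepr : SkelStep E w (P.u (c + 1)))
    (hA : 2 ≤ c → ActiveTriple E Z (P.u (c - 2)) (P.u (c - 1)) w)
    (hB : ActiveTriple E Z (P.u (c - 1)) w (P.u (c + 1)))
    (hC : c + 2 ≤ P.k → ActiveTriple E Z w (P.u (c + 1)) (P.u (c + 2))) :
    ∃ Q : APath E Z x y, Q.k = P.k ∧ ∀ t, Q.u t = if t = c then w else P.u t := by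
  obtain ⟨k, u, hk, hx, hy, inj, chain, act⟩ := P
  simp only at *
  set u' : ℕ → V := fun t => if t = c then w else u t with hu'
  have hne : ∀ t, t ≠ c → u' t = u t := by intro t ht; simp [hu', ht]
  have heq : u' c = w := by simp [hu']
  refine ⟨⟨k, u', hk, ?_, ?_, ?_, ?_, ?_⟩, rfl, fun t => rfl⟩
  · rw [hne 0 (by omega)]; exact hx
  · rw [hne k (by omega)]; exact hy
  · intro t1 ht1 t2 ht2 hne'
    by_cases h1 : t1 = c <;> by_cases h2 : t2 = c
    · omega
    · rw [h1, heq, hne t2 h2]; exact fun hcon => hwnew t2 ht2 hcon.symm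
    · rw [h2, heq, hne t1 h1]; exact fun hcon => hwnew t1 ht1 hcon
    · rw [hne t1 h1, hne t2 h2]; exact inj t1 ht1 t2 ht2 hne'
  · intro t ht
    by_cases h1 : t = c
    · rw [h1, heq, hne (c+1) (by omega)]
      exact hstepr
    by_cases h2 : t + 1 = c
    · rw [hne t h1, h2, heq]
      have e1 : t = c - 1 := by omega
      rw [e1]
      exact hstepl
    · rw [hne t h1, hne (t+1) h2]; exact chain t ht
  · intro t ht
    by_cases h1 : t = c
    · rw [h1, heq, hne (c+1) (by omega), hne (c+2) (by omega)]
      exact hC (by omega)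
    by_cases h2 : t + 1 = c
    · rw [hne t h1, h2, heq, hne (t+2) (by omega)]
      have e2 : t + 2 = c + 1 := by omega
      have e1 : t = c - 1 := by omega
      rw [e2, e1]
      exact hB
    by_cases h3 : t + 2 = c
    · rw [hne t h1, hne (t+1) h2, h3, heq]
      have e2 : t + 1 = c - 1 := by omega
      have e1 : t = c - 2 := by omega
      rw [e2, e1]
      exact hA (by omega)
    · rw [hne t h1, hne (t+1) h2, hne (t+2) h3]
      exact act t ht

end Stmt10Aux
end AuxProof3

section AuxProof4
open Relation
variable {G : PDGraph V} {E : V → V → Prop} {Z : Set V} {x y : V}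
namespace Stmt10Aux

/-- A chordless partially directed path in functional form. -/
structure CPD (G : PDGraph V) (x y : V) : Type _ where
  k : ℕ
  u : ℕ → V
  hk : 1 ≤ k
  hx : u 0 = x
  hy : u k = y
  inj : ∀ i ≤ k, ∀ j ≤ k, i ≠ j → u i ≠ u j
  step : ∀ t < k, PDStep G (u t) (u (t + 1))
  chordless : ∀ i j, i + 2 ≤ j → j ≤ k → ¬ G.adj (u i) (u j)

/-- From a directed path in a class member, extract a chordless PD path (L3). -/
lemma cpd_of_dirchain (hE : InClass G E) :
    ∀ n, ∀ u : ℕ → V, 1 ≤ n → u 0 = x → u n = y → (∀ t < n, E (u t) (u (t + 1))) →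
    Nonempty (CPD G x y) := by
  intro n
  induction n using Nat.strong_induction_on with
  | _ n ih =>
  intro u hn h0 hn' hch
  have hinj : ∀ i ≤ n, ∀ j ≤ n, i ≠ j → u i ≠ u j := by
    intro i hi j hj hij hcon
    rcases Nat.lt_or_gt_of_ne hij with h | h
    · have htg := tg_of_chain (E := E) h (fun t ht ht' => hch t (by omega))
      rw [← hcon] at htg
      exact inclass_dag hE (u i) htg
    · have htg := tg_of_chain (E := E) h (fun t ht ht' => hch t (by omega))
      rw [hcon] at htg
      exact inclass_dag hE (u j) htg
  by_cases hcl : ∀ i j, i + 2 ≤ j → j ≤ n → ¬ G.adj (u i) (u j)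
  · refine ⟨⟨n, u, hn, h0, hn', hinj, ?_, hcl⟩⟩
    intro t ht
    rcases edge_cases hE (hch t ht) with h | h
    · exact Or.inl h
    · exact Or.inr h
  · push_neg at hcl
    obtain ⟨i, j, hij, hjn, hadj⟩ := hcl
    have hEij : E (u i) (u j) := by
      rcases adjE hE hadj with h | h
      · exact h
      · exact absurd h (fun h' => inclass_dag hE (u i)
          (TransGen.tail (tg_of_chain (show i < j by omega)
            (fun t ht ht' => hch t (by omega))) h'))
    set d := j - i - 1 with hd
    have hd1 : 1 ≤ d := by omega
    set u' : ℕ → V := fun t => if t ≤ i then u t else u (t + d) with hu'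
    have hui : ∀ t ≤ i, u' t = u t := by intro t ht; simp [hu', ht]
    have huii : ∀ t, i < t → u' t = u (t + d) := by
      intro t ht
      have h : ¬ (t ≤ i) := by omega
      simp [hu', h]
    refine ih (n - d) (by omega) u' (by omega) ?_ ?_ ?_
    · rw [hui 0 (by omega)]; exact h0
    · rw [huii (n - d) (by omega)]
      have e : n - d + d = n := by omega
      rw [e]; exact hn'
    · intro t ht
      rcases Nat.lt_trichotomy t i with h1 | h1 | h1
      · rw [hui t (by omega), hui (t+1) (by omega)]; exact hch t (by omega)
      · subst h1
        rw [hui t le_rfl, huii (t+1) (by omega)]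
        have e : t + 1 + d = j := by omega
        rw [e]; exact hEij
      · rw [huii t h1, huii (t+1) (by omega)]
        have e : t + 1 + d = t + d + 1 := by omega
        rw [e]
        exact hch (t + d) (by omega)

lemma cpd_of_tg (hE : InClass G E) (h : Relation.TransGen E x y) : Nonempty (CPD G x y) := by
  obtain ⟨n, u, hn, h0, hn', hch⟩ := chain_of_tg h
  exact cpd_of_dirchain hE n u hn h0 hn' hch

/-- From a chordless PD path, build a class member with a directed path (L4). -/
lemma tg_of_cpd (hG : IsCPDAG G) (P : CPD G x y) :
    ∃ E, InClass G E ∧ Relation.TransGen E x y := by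
  classical
  obtain ⟨k, u, hk, hx, hy, inj, step, chordless⟩ := P
  by_cases hall : ∀ t < k, G.dir (u t) (u (t+1))
  · obtain ⟨E₀, hE₀⟩ := hG.1
    refine ⟨E₀, hE₀, ?_⟩
    rw [← hx, ← hy]
    exact tg_of_chain hk (fun t _ ht => inclass_dir hE₀ (hall t ht))
  · push_neg at hall
    have hex : ∃ t, t < k ∧ ¬ G.dir (u t) (u (t+1)) := by
      obtain ⟨t, h1, h2⟩ := hall; exact ⟨t, h1, h2⟩
    set J := Nat.find hex with hJ
    obtain ⟨hJk, hJnd⟩ := Nat.find_spec hex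
    have hJmin : ∀ t < J, G.dir (u t) (u (t+1)) := by
      intro t ht
      by_contra hnd
      exact Nat.find_min hex ht ⟨by omega, hnd⟩
    have hund : G.undir (u J) (u (J+1)) := by
      rcases step J hJk with h | h
      · exact absurd h hJnd
      · exact h
    obtain ⟨E₃, hE₃, hEJ⟩ := hG.2 _ _ hund
    have hforce : ∀ t, t < k → E₃ (u t) (u (t+1)) := by
      intro t
      induction t using Nat.strong_induction_on with
      | _ t ih =>
      intro htk
      rcases Nat.lt_trichotomy t J with h | h | h
      · exact inclass_dir hE₃ (hJmin t h)
      · rw [h]; exact hEJ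
      · rcases step t htk with hdir | hundir
        · exact inclass_dir hE₃ hdir
        · rcases inclass_undir hE₃ hundir with hgood | hbad
          · exact hgood
          · exfalso
            have hprev : E₃ (u (t-1)) (u t) := by
              have := ih (t-1) (by omega) (by omega)
              have e : t - 1 + 1 = t := by omega
              rwa [e] at this
            have hnadj := chordless (t-1) (t+1) (by omega) (by omega)
            have hvs : VStruct E₃ (u (t-1)) (u t) (u (t+1)) :=
              ⟨hprev, hbad, inj (t-1) (by omega) (t+1) (by omega) (by omega),
                (nonadjE hE₃ hnadj).1, (nonadjE hE₃ hnadj).2⟩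
            exact G.not_mixed _ _ (inclass_vs hE₃ hvs).2 (G.undir_symm hundir)
    refine ⟨E₃, hE₃, ?_⟩
    rw [← hx, ← hy]
    exact tg_of_chain hk (fun t _ ht => hforce t ht)

/-- A chordless PD path is d-connecting given `pa x` in every class member (L5). -/
lemma dconn_of_cpd (P : CPD G x y) (hE : InClass G E) :
    DConn E (G.pa x) x y := by
  obtain ⟨k, u, hk, hx, hy, inj, step, chordless⟩ := P
  have hxZ : x ∉ G.pa x := G.dir_irrefl x
  have hnd1 : ∀ j, 1 ≤ j → j ≤ k → ¬ G.dir (u j) x := by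
    intro j h1 h2 hdir
    rcases Nat.lt_or_ge j 2 with hj | hj
    · have hj1 : j = 1 := by omega
      subst hj1
      rcases step 0 (by omega) with h | h
      · rw [hx] at h; exact G.not_double _ _ h hdir
      · rw [hx] at h; exact G.not_mixed _ _ hdir (G.undir_symm h)
    · have := chordless 0 j (by omega) h2
      rw [hx] at this
      exact this (Or.inr (Or.inl hdir))
  have hyZ : y ∉ G.pa x := by
    intro hm
    exact hnd1 k (by omega) le_rfl (by rw [hy]; exact hm)
  refine dconn_of_apath hxZ hyZ ⟨k, u, hk, hx, hy, inj, ?_, ?_⟩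
  · intro t ht
    rcases step t ht with h | h
    · exact Or.inl (inclass_dir hE h)
    · exact inclass_undir hE h
  · intro t ht
    apply at_noncol
    · rintro ⟨h1, h2⟩
      rcases step (t+1) (by omega) with hdir | hundir
      · exact dag_asymm (inclass_dag hE) (inclass_dir hE hdir) h2
      · have hnadj := chordless t (t+2) (by omega) (by omega)
        have hvs : VStruct E (u t) (u (t+1)) (u (t+2)) :=
          ⟨h1, h2, inj t (by omega) (t+2) (by omega) (by omega),
            (nonadjE hE hnadj).1, (nonadjE hE hnadj).2⟩
        exact G.not_mixed _ _ (inclass_vs hE hvs).2 (G.undir_symm hundir)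
    · intro hm
      exact hnd1 (t+1) (by omega) (by omega) hm

end Stmt10Aux
end AuxProof4

section AuxProof5
open Relation
variable {G : PDGraph V} {E : V → V → Prop} {Z : Set V} {x y : V}
namespace Stmt10Aux

lemma chain_of_rtg {a b : V} (h : Relation.ReflTransGen E a b) :
    ∃ (n : ℕ) (u : ℕ → V), u 0 = a ∧ u n = b ∧ ∀ t < n, E (u t) (u (t + 1)) := by
  induction h with
  | refl => exact ⟨0, fun _ => a, rfl, rfl, by omega⟩
  | @tail c d _ hlast ih =>
    obtain ⟨n, u, h0, hn', hch⟩ := ih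
    refine ⟨n + 1, fun t => if t ≤ n then u t else d, ?_, by simp, ?_⟩
    · have : (0:ℕ) ≤ n := by omega
      simp [this, h0]
    · intro t ht
      rcases Nat.lt_or_ge t n with h' | h'
      · have h1 : t ≤ n := by omega
        have h2 : t + 1 ≤ n := by omega
        simpa [h1, h2] using hch t h'
      · have : t = n := by omega
        subst this
        have h1 : t ≤ t := le_rfl
        have h2 : ¬ (t + 1 ≤ t) := by omega
        simpa [h1, h2, hn'] using hlast

lemma rtg_of_chain {u : ℕ → V} {a b : ℕ} (hab : a ≤ b)
    (h : ∀ t, a ≤ t → t < b → E (u t) (u (t + 1))) :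
    Relation.ReflTransGen E (u a) (u b) := by
  induction b with
  | zero =>
    have : a = 0 := by omega
    subst this
    exact Relation.ReflTransGen.refl
  | succ n ih =>
    rcases Nat.lt_or_ge a (n + 1) with h' | h'
    · exact Relation.ReflTransGen.tail (ih (by omega) (fun t ht ht' => h t ht (by omega)))
        (h n (by omega) (by omega))
    · have : a = n + 1 := by omega
      subst this
      exact Relation.ReflTransGen.refl

/-- A forward run from `x` cannot be followed by a backward edge:
the resulting collider would be an ancestor of `x` via its `Z`-descendant. -/
lemma fwd_run_no_bwd (hE : InClass G E) (P : APath E (G.pa x) x y) {t : ℕ}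
    (ht1 : 1 ≤ t) (htk : t < P.k)
    (hfwd : ∀ s < t, E (P.u s) (P.u (s + 1)))
    (hbwd : E (P.u (t + 1)) (P.u t)) : False := by
  have hact := P.act (t - 1) (by omega)
  have e1 : t - 1 + 1 = t := by omega
  have e2 : t - 1 + 2 = t + 1 := by omega
  rw [e1, e2] at hact
  have hf : E (P.u (t - 1)) (P.u t) := by
    have := hfwd (t - 1) (by omega)
    rwa [e1] at this
  obtain ⟨d, hd, hrtg⟩ := hact.1 ⟨hf, hbwd⟩
  have htgx : Relation.TransGen E x (P.u t) := by
    have := tg_of_chain (E := E) (u := P.u) (a := 0) (b := t) (by omega)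
      (fun s hs hs' => hfwd s hs')
    rwa [P.hx] at this
  exact inclass_dag hE x ((htgx.trans_left hrtg).tail (inclass_dir hE hd))

/-- If there is no directed path from `x` to `y` in `E`, the first edge of an active
path must point backward (into `x`). -/
lemma first_edge_bwd (hE : InClass G E) (P : APath E (G.pa x) x y)
    (hnt : ¬ Relation.TransGen E x y) : E (P.u 1) (P.u 0) := by
  classical
  by_cases hall : ∀ t < P.k, E (P.u t) (P.u (t + 1))
  · exfalso
    apply hnt
    have := tg_of_chain (E := E) (u := P.u) (a := 0) (b := P.k) P.hk
      (fun s hs hs' => hall s hs')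
    rwa [P.hx, P.hy] at this
  · push_neg at hall
    have hex : ∃ t, t < P.k ∧ ¬ E (P.u t) (P.u (t + 1)) := by
      obtain ⟨t, h1, h2⟩ := hall; exact ⟨t, h1, h2⟩
    set t₁ := Nat.find hex with ht₁
    obtain ⟨h1, h2⟩ := Nat.find_spec hex
    have hbwd : E (P.u (t₁ + 1)) (P.u t₁) := by
      rcases P.chain t₁ h1 with h | h
      · exact absurd h h2
      · exact h
    rcases Nat.eq_or_lt_of_le (Nat.zero_le t₁) with h0 | h0
    · rw [← h0] at hbwd
      simpa using hbwd
    · exfalso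
      refine fwd_run_no_bwd hE P h0 h1 ?_ hbwd
      intro s hs
      by_contra hns
      exact Nat.find_min hex hs ⟨by omega, hns⟩

/-- Chordlessness of the initial backward run. -/
lemma prefixB (hE : InClass G E) (P : APath E (G.pa x) x y)
    (hmin : ∀ (E' : V → V → Prop), InClass G E' → ∀ Q : APath E' (G.pa x) x y, ¬ Q.k < P.k)
    {m : ℕ} (hmk : m ≤ P.k)
    (hbwd : ∀ t < m, E (P.u (t + 1)) (P.u t))
    (hnonZ : ∀ t, 1 ≤ t → t ≤ m → P.u t ∉ G.pa x) :
    ∀ i j, i + 2 ≤ j → j ≤ m → ¬ G.adj (P.u i) (P.u j) := by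
  intro i j hij hjm hadj
  have hEji : E (P.u j) (P.u i) := by
    rcases adjE hE hadj with h | h
    · exfalso
      have htg : Relation.TransGen E (P.u j) (P.u i) :=
        tg_of_chain_rev (E := E) (u := P.u) (by omega) (fun s hs hs' => hbwd s (by omega))
      exact inclass_dag hE (P.u i) (Relation.TransGen.head h htg)
    · exact h
  have hL : i = 0 ∨ ActiveTriple E (G.pa x) (P.u (i - 1)) (P.u i) (P.u j) := by
    rcases Nat.eq_or_lt_of_le (Nat.zero_le i) with h0 | h0
    · exact Or.inl h0.symm
    · refine Or.inr (at_noncol ?_ (hnonZ i (by omega) (by omega)))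
      rintro ⟨hc1, -⟩
      have hb := hbwd (i - 1) (by omega)
      have e1 : i - 1 + 1 = i := by omega
      rw [e1] at hb
      exact dag_asymm (inclass_dag hE) hb hc1
  have hR : j = P.k ∨ ActiveTriple E (G.pa x) (P.u i) (P.u j) (P.u (j + 1)) := by
    rcases Nat.eq_or_lt_of_le hjm with hj | hj
    · rcases Nat.eq_or_lt_of_le hmk with hm | hm
      · exact Or.inl (by omega)
      · refine Or.inr (at_noncol ?_ (hnonZ j (by omega) (by omega)))
        rintro ⟨hc1, -⟩
        exact dag_asymm (inclass_dag hE) hEji hc1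
    · refine Or.inr (at_noncol ?_ (hnonZ j (by omega) (by omega)))
      rintro ⟨hc1, -⟩
      exact dag_asymm (inclass_dag hE) hEji hc1
  obtain ⟨Q, hQ⟩ := shortcut P hij (by omega) (Or.inr hEji) hL hR
  exact hmin E hE Q hQ

/-- The initial backward run consists of undirected edges. -/
lemma prefixA (hG : IsCPDAG G) (hE : InClass G E) (P : APath E (G.pa x) x y)
    {m : ℕ} (hmk : m ≤ P.k)
    (hbwd : ∀ t < m, E (P.u (t + 1)) (P.u t))
    (hnonZ : ∀ t, 1 ≤ t → t ≤ m → P.u t ∉ G.pa x)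
    (hB : ∀ i j, i + 2 ≤ j → j ≤ m → ¬ G.adj (P.u i) (P.u j)) :
    ∀ t < m, G.undir (P.u t) (P.u (t + 1)) := by
  intro t
  induction t using Nat.strong_induction_on with
  | _ t ih =>
  intro htm
  rcases edge_cases hE (hbwd t htm) with hdir | hund
  · exfalso
    rcases Nat.eq_or_lt_of_le (Nat.zero_le t) with h0 | h0
    · -- t = 0 : G.dir (u 1) (u 0) = G.dir (u 1) x, so u 1 ∈ pa x
      have ht0 : t = 0 := by omega
      subst ht0
      apply hnonZ 1 le_rfl (by omega)
      show G.dir (P.u 1) x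
      have hh := hdir
      rw [P.hx] at hh
      exact hh
    · -- t ≥ 1 : use W1 with the previous undirected edge
      have hund' : G.undir (P.u t) (P.u (t - 1)) := by
        have := ih (t - 1) (by omega) (by omega)
        have e : t - 1 + 1 = t := by omega
        rw [e] at this
        exact G.undir_symm this
      refine W1 hG hdir hund' ?_ ?_
      · exact (P.inj (t + 1) (by omega) (t - 1) (by omega) (by omega)).symm ∘ Eq.symm
      · intro hadj
        exact hB (t - 1) (t + 1) (by omega) (by omega) (adj_symm hadj)
  · exact G.undir_symm hund

/-- Chord elimination in the forward region. -/
lemma fwdChords (hE : InClass G E) (P : APath E (G.pa x) x y)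
    (hmin : ∀ (E' : V → V → Prop), InClass G E' → ∀ Q : APath E' (G.pa x) x y, ¬ Q.k < P.k)
    {m e : ℕ} (hme : m < e) (hek : e ≤ P.k)
    (hbwd : ∀ t < m, E (P.u (t + 1)) (P.u t))
    (hfwd : ∀ t, m ≤ t → t < e → E (P.u t) (P.u (t + 1)))
    (hnonZ : ∀ t, 1 ≤ t → t ≤ e → P.u t ∉ G.pa x)
    (hend : e = P.k ∨ (∀ i, i + 2 ≤ e → E (P.u i) (P.u e) →
      ActiveTriple E (G.pa x) (P.u i) (P.u e) (P.u (e + 1)))) :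
    ∀ i j, i + 2 ≤ j → m < j → j ≤ e → ¬ G.adj (P.u i) (P.u j) := by
  intro i j hij hmj hje hadj
  rcases adjE hE hadj with hEij | hEji
  · -- forward chord : shortcut
    have hL : i = 0 ∨ ActiveTriple E (G.pa x) (P.u (i - 1)) (P.u i) (P.u j) := by
      rcases Nat.eq_or_lt_of_le (Nat.zero_le i) with h0 | h0
      · exact Or.inl h0.symm
      · refine Or.inr (at_noncol ?_ (hnonZ i (by omega) (by omega)))
        rintro ⟨-, hc2⟩
        exact dag_asymm (inclass_dag hE) hEij hc2
    have hR : j = P.k ∨ ActiveTriple E (G.pa x) (P.u i) (P.u j) (P.u (j + 1)) := by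
      rcases Nat.lt_or_ge j e with hje' | hje'
      · refine Or.inr (at_noncol ?_ (hnonZ j (by omega) (by omega)))
        rintro ⟨-, hc2⟩
        exact dag_asymm (inclass_dag hE) (hfwd j (by omega) hje') hc2
      · have hj : j = e := by omega
        subst hj
        rcases hend with h | h
        · exact Or.inl h
        · exact Or.inr (h i hij hEij)
    obtain ⟨Q, hQ⟩ := shortcut P hij (by omega) (Or.inl hEij) hL hR
    exact hmin E hE Q hQ
  · -- backward chord
    rcases Nat.lt_or_ge i m with him | him
    · have hL : i = 0 ∨ ActiveTriple E (G.pa x) (P.u (i - 1)) (P.u i) (P.u j) := by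
        rcases Nat.eq_or_lt_of_le (Nat.zero_le i) with h0 | h0
        · exact Or.inl h0.symm
        · refine Or.inr (at_noncol ?_ (hnonZ i (by omega) (by omega)))
          rintro ⟨hc1, -⟩
          have hb := hbwd (i - 1) (by omega)
          have e1 : i - 1 + 1 = i := by omega
          rw [e1] at hb
          exact dag_asymm (inclass_dag hE) hb hc1
      have hR : j = P.k ∨ ActiveTriple E (G.pa x) (P.u i) (P.u j) (P.u (j + 1)) := by
        rcases Nat.eq_or_lt_of_le hje with hj | hj
        · rcases Nat.eq_or_lt_of_le hek with hk | hk
          · exact Or.inl (by omega)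
          · refine Or.inr (at_noncol ?_ (hnonZ j (by omega) (by omega)))
            rintro ⟨hc1, -⟩
            exact dag_asymm (inclass_dag hE) hEji hc1
        · refine Or.inr (at_noncol ?_ (hnonZ j (by omega) (by omega)))
          rintro ⟨hc1, -⟩
          exact dag_asymm (inclass_dag hE) hEji hc1
      obtain ⟨Q, hQ⟩ := shortcut P hij (by omega) (Or.inr hEji) hL hR
      exact hmin E hE Q hQ
    · -- i in the forward region : cycle
      have htg : Relation.TransGen E (P.u i) (P.u j) :=
        tg_of_chain (E := E) (u := P.u) (by omega)
          (fun s hs hs' => hfwd s (by omega) (by omega))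
      exact inclass_dag hE (P.u i) (htg.tail hEji)

end Stmt10Aux
end AuxProof5

section AuxProof6
open Relation
variable {G : PDGraph V} {E : V → V → Prop} {Z : Set V} {x y : V}
namespace Stmt10Aux

/-- A collider on an active path (functional form): triple index `t`, collider
vertex `P.u (t+1)`. -/
def Col {E : V → V → Prop} {Z : Set V} {x y : V} (P : APath E Z x y) (t : ℕ) : Prop :=
  t + 2 ≤ P.k ∧ E (P.u t) (P.u (t + 1)) ∧ E (P.u (t + 2)) (P.u (t + 1))

/-- The collider-free case: a globally minimal active path with no collider
yields a chordless PD path, contradiction. -/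
lemma cf_case (hG : IsCPDAG G) (hE : InClass G E) (P : APath E (G.pa x) x y)
    (hyZ : y ∉ G.pa x)
    (hQ : ¬ Nonempty (CPD G x y))
    (hnt : ∀ E', InClass G E' → ¬ Relation.TransGen E' x y)
    (hmin : ∀ (E' : V → V → Prop), InClass G E' → ∀ Q : APath E' (G.pa x) x y, ¬ Q.k < P.k)
    (hnocol : ∀ t, ¬ Col P t) : False := by
  classical
  have hbwd0 : E (P.u 1) (P.u 0) := first_edge_bwd hE P (hnt E hE)
  -- the degenerate length-1 case
  rcases Nat.eq_or_lt_of_le P.hk with hk1 | hk2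
  · have hy1 : P.u 1 = y := by
      have hh := P.hy
      rw [← hk1] at hh
      exact hh
    rcases edge_cases hE hbwd0 with hdir | hund
    · apply hyZ
      show G.dir y x
      rw [hy1, P.hx] at hdir
      exact hdir
    · apply hQ
      refine ⟨⟨1, P.u, le_rfl, P.hx, hy1, ?_, ?_, ?_⟩⟩
      · intro i hi j hj hij
        exact P.inj i (by omega) j (by omega) hij
      · intro t ht
        have ht0 : t = 0 := by omega
        subst ht0
        exact Or.inr (G.undir_symm hund)
      · intro i j hij hj
        omega
  -- main case : P.k ≥ 2
  have hnonZ : ∀ t, 1 ≤ t → t ≤ P.k → P.u t ∉ G.pa x := by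
    intro t ht1 htk
    rcases Nat.eq_or_lt_of_le htk with h | h
    · rw [h, P.hy]; exact hyZ
    · have hact := (P.act (t - 1) (by omega)).2
      have e1 : t - 1 + 1 = t := by omega
      have e2 : t - 1 + 2 = t + 1 := by omega
      rw [e1, e2] at hact
      apply hact
      intro ⟨hc1, hc2⟩
      apply hnocol (t - 1)
      refine ⟨by omega, ?_, ?_⟩
      · rw [e1]; exact hc1
      · rw [e1, e2]; exact hc2
  have hexm : ∃ t, t = P.k ∨ E (P.u t) (P.u (t + 1)) := ⟨P.k, Or.inl rfl⟩
  set m := Nat.find hexm with hm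
  have hmspec := Nat.find_spec hexm
  rw [← hm] at hmspec
  have hmk : m ≤ P.k := by
    by_contra hc
    exact (Nat.find_min hexm (show P.k < m by omega)) (Or.inl rfl)
  have hbwd : ∀ t < m, E (P.u (t + 1)) (P.u t) := by
    intro t ht
    have hnp := Nat.find_min hexm ht
    push_neg at hnp
    rcases P.chain t (by omega) with h | h
    · exact absurd h hnp.2
    · exact h
  have hm1 : 1 ≤ m := by
    rcases Nat.eq_or_lt_of_le (Nat.zero_le m) with h0 | h0
    · exfalso
      rcases hmspec with h | h
      · omega
      · rw [← h0] at h
        exact dag_asymm (inclass_dag hE) hbwd0 (by simpa using h)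
    · exact h0
  have hBpre := prefixB hE P hmin hmk hbwd (fun t h1 h2 => hnonZ t h1 (by omega))
  have hApre := prefixA hG hE P hmk hbwd (fun t h1 h2 => hnonZ t h1 (by omega)) hBpre
  rcases Nat.eq_or_lt_of_le hmk with hmeq | hmlt
  · -- all edges backward and undirected : chordless undirected path
    apply hQ
    refine ⟨⟨P.k, P.u, P.hk, P.hx, P.hy, P.inj, ?_, ?_⟩⟩
    · intro t ht
      exact Or.inr (hApre t (by omega))
    · intro i j hij hj
      exact hBpre i j hij (by omega)
  · -- forward region m..k
    have hfwdm : E (P.u m) (P.u (m + 1)) := by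
      rcases hmspec with h | h
      · omega
      · exact h
    have hfwd : ∀ t, m ≤ t → t < P.k → E (P.u t) (P.u (t + 1)) := by
      intro t
      induction t using Nat.strong_induction_on with
      | _ t ih =>
      intro hmt htk
      rcases Nat.eq_or_lt_of_le hmt with h | h
      · rw [← h]; exact hfwdm
      · rcases P.chain t htk with hf | hb
        · exact hf
        · exfalso
          apply hnocol (t - 1)
          have e1 : t - 1 + 1 = t := by omega
          have e2 : t - 1 + 2 = t + 1 := by omega
          refine ⟨by omega, ?_, ?_⟩
          · rw [e1]
            have := ih (t - 1) (by omega) (by omega) (by omega)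
            rwa [e1] at this
          · rw [e1, e2]; exact hb
    have hfch := fwdChords hE P hmin hmlt le_rfl hbwd hfwd hnonZ (Or.inl rfl)
    apply hQ
    refine ⟨⟨P.k, P.u, P.hk, P.hx, P.hy, P.inj, ?_, ?_⟩⟩
    · intro t ht
      rcases Nat.lt_or_ge t m with h | h
      · exact Or.inr (hApre t h)
      · rcases edge_cases hE (hfwd t h ht) with h' | h'
        · exact Or.inl h'
        · exact Or.inr h'
    · intro i j hij hj
      rcases le_or_gt j m with h | h
      · exact hBpre i j hij h
      · exact hfch i j hij h hj

end Stmt10Aux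
end AuxProof6

section AuxProof7
open Relation
variable {G : PDGraph V} {E : V → V → Prop} {Z : Set V} {x y : V}
namespace Stmt10Aux

lemma col_case (hG : IsCPDAG G) (hE : InClass G E) (P : APath E (G.pa x) x y)
    (hnt : ∀ E', InClass G E' → ¬ Relation.TransGen E' x y)
    (hmin : ∀ (E' : V → V → Prop), InClass G E' → ∀ Q : APath E' (G.pa x) x y, ¬ Q.k < P.k)
    {a : ℕ} (hcola : Col P a) (hfirst : ∀ s < a, ¬ Col P s)
    {l : ℕ} {w : ℕ → V} (hw0 : w 0 = P.u (a + 1))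
    (hwch : ∀ s < l, E (w s) (w (s + 1))) (hwZ : w l ∈ G.pa x)
    (Bpred : ℕ → Prop)
    (hBnew : ∀ (l' : ℕ) (E' : V → V → Prop), InClass G E' →
      ∀ P' : APath E' (G.pa x) x y, P'.k = P.k →
      ∀ a', Col P' a' → (∀ s < a', ¬ Col P' s) →
      ∀ w' : ℕ → V, w' 0 = P'.u (a' + 1) → (∀ s < l', E' (w' s) (w' (s + 1))) →
      w' l' ∈ G.pa x → Bpred l')
    (hlmin : ∀ l' < l, ¬ Bpred l') : False := by
  classical
  obtain ⟨hak, hfa, hba⟩ := hcola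
  have hdag := inclass_dag hE
  -- Step 1 : the first edge is backward
  have hbwd0 : E (P.u 1) (P.u 0) := first_edge_bwd hE P (hnt E hE)
  -- Step 2 : the backward prefix
  have hexm : ∃ t, t = P.k ∨ E (P.u t) (P.u (t + 1)) := ⟨P.k, Or.inl rfl⟩
  set m := Nat.find hexm with hm
  have hmspec := Nat.find_spec hexm
  rw [← hm] at hmspec
  have hmk : m ≤ P.k := by
    by_contra hc
    exact (Nat.find_min hexm (show P.k < m by omega)) (Or.inl rfl)
  have hbwd : ∀ t < m, E (P.u (t + 1)) (P.u t) := by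
    intro t ht
    have hnp := Nat.find_min hexm ht
    push_neg at hnp
    rcases P.chain t (by omega) with h | h
    · exact absurd h hnp.2
    · exact h
  have hm1 : 1 ≤ m := by
    rcases Nat.eq_or_lt_of_le (Nat.zero_le m) with h0 | h0
    · exfalso
      rcases hmspec with h | h
      · omega
      · rw [← h0] at h
        exact dag_asymm hdag hbwd0 (by simpa using h)
    · exact h0
  have hma : m ≤ a := by
    by_contra hc
    exact dag_asymm hdag hfa (hbwd a (by omega))
  -- Step 3 : the forward run up to the collider
  have hfwd : ∀ t, m ≤ t → t ≤ a → E (P.u t) (P.u (t + 1)) := by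
    intro t
    induction t using Nat.strong_induction_on with
    | _ t ih =>
    intro hmt hta
    rcases Nat.eq_or_lt_of_le hmt with h | h
    · rcases hmspec with h' | h'
      · omega
      · rw [← h]; exact h'
    · rcases P.chain t (by omega) with hf | hb
      · exact hf
      · exfalso
        apply hfirst (t - 1) (by omega)
        have e1 : t - 1 + 1 = t := by omega
        have e2 : t - 1 + 2 = t + 1 := by omega
        refine ⟨by omega, ?_, ?_⟩
        · rw [e1]
          have := ih (t - 1) (by omega) (by omega) (by omega)
          rwa [e1] at this
        · rw [e1, e2]; exact hb
  -- Step 4 : the collider has a `Z`-descendant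
  obtain ⟨d, hd, hrtg⟩ := (P.act a hak).1 ⟨hfa, hba⟩
  -- Step 5 : vertices up to the collider are not in `Z`
  have hnonZ : ∀ t, 1 ≤ t → t ≤ a → P.u t ∉ G.pa x := by
    intro t ht1 hta
    have hact := (P.act (t - 1) (by omega)).2
    have e1 : t - 1 + 1 = t := by omega
    have e2 : t - 1 + 2 = t + 1 := by omega
    rw [e1, e2] at hact
    apply hact
    intro ⟨hc1, hc2⟩
    apply hfirst (t - 1) (by omega)
    refine ⟨by omega, ?_, ?_⟩
    · rw [e1]; exact hc1
    · rw [e1, e2]; exact hc2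
  -- Step 6 : chordlessness up to `a`
  have hBpre := prefixB hE P hmin (by omega : m ≤ P.k) hbwd
    (fun t h1 h2 => hnonZ t h1 (by omega))
  have hchA : ∀ i j, i + 2 ≤ j → j ≤ a → ¬ G.adj (P.u i) (P.u j) := by
    intro i j hij hja
    rcases le_or_gt j m with h | h
    · exact hBpre i j hij h
    · rcases Nat.eq_or_lt_of_le hja with hj | hj
      · -- j = a : use fwdChords with e := a
        refine fwdChords hE P hmin (show m < a by omega) (by omega) hbwd
          (fun t h1 h2 => hfwd t h1 (by omega)) (fun t h1 h2 => hnonZ t h1 h2) ?_ i j hij h hja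
        refine Or.inr ?_
        intro i' hi' hEia
        refine at_noncol ?_ (hnonZ a (by omega) le_rfl)
        rintro ⟨-, hc2⟩
        exact dag_asymm hdag hfa hc2
      · refine fwdChords hE P hmin (show m < a by omega) (by omega) hbwd
          (fun t h1 h2 => hfwd t h1 (by omega)) (fun t h1 h2 => hnonZ t h1 h2) ?_ i j hij h hja
        refine Or.inr ?_
        intro i' hi' hEia
        refine at_noncol ?_ (hnonZ a (by omega) le_rfl)
        rintro ⟨-, hc2⟩
        exact dag_asymm hdag hfa hc2
  -- Step 7 : the prefix is undirected
  have hApre := prefixA hG hE P (by omega : m ≤ P.k) hbwd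
    (fun t h1 h2 => hnonZ t h1 (by omega)) hBpre
  -- Step 8 : forced orientation at the collider (M12)
  have hM12 : G.dir (P.u a) (P.u (a + 1)) ∧ G.dir (P.u (a + 2)) (P.u (a + 1)) := by
    by_cases hadj : G.adj (P.u a) (P.u (a + 2))
    · exfalso
      have hstep : SkelStep E (P.u a) (P.u (a + 2)) := adjE hE hadj
      have hL : a = 0 ∨ ActiveTriple E (G.pa x) (P.u (a - 1)) (P.u a) (P.u (a + 2)) := by
        refine Or.inr ?_
        rcases adjE hE hadj with hf | hb
        · refine at_noncol ?_ (hnonZ a (by omega) le_rfl)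
          rintro ⟨-, hc2⟩
          exact dag_asymm hdag hf hc2
        · rcases Nat.eq_or_lt_of_le hma with hmeq | hmlt
          · refine at_noncol ?_ (hnonZ a (by omega) le_rfl)
            rintro ⟨hc1, -⟩
            have hbb := hbwd (a - 1) (by omega)
            have e1 : a - 1 + 1 = a := by omega
            rw [e1] at hbb
            exact dag_asymm hdag hbb hc1
          · by_cases hcol2 : E (P.u (a - 1)) (P.u a)
            · exact at_col hcol2 hb hd (Relation.ReflTransGen.head hfa hrtg)
            · exact at_noncol (fun hcc => hcol2 hcc.1) (hnonZ a (by omega) le_rfl)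
      have hncZ2 : a + 3 ≤ P.k → P.u (a + 2) ∉ G.pa x := by
        intro h3
        have hact := (P.act (a + 1) (by omega)).2
        apply hact
        rintro ⟨hc1, -⟩
        exact dag_asymm hdag hba hc1
      have hR : a + 2 = P.k ∨ ActiveTriple E (G.pa x) (P.u a) (P.u (a + 2)) (P.u (a + 3)) := by
        rcases Nat.eq_or_lt_of_le hak with hk' | hk'
        · exact Or.inl hk' 
        · refine Or.inr ?_
          rcases adjE hE hadj with hf | hb
          · by_cases hcol3 : E (P.u (a + 3)) (P.u (a + 2))
            · exact at_col hf hcol3 hd (Relation.ReflTransGen.head hba hrtg)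
            · exact at_noncol (fun hcc => hcol3 hcc.2) (hncZ2 (by omega))
          · refine at_noncol ?_ (hncZ2 (by omega))
            rintro ⟨hc1, -⟩
            exact dag_asymm hdag hb hc1
      obtain ⟨Q, hQ⟩ := shortcut P (by omega : a + 2 ≤ a + 2) (by omega) hstep hL hR
      exact hmin E hE Q hQ
    · have hvs : VStruct E (P.u a) (P.u (a + 1)) (P.u (a + 2)) :=
        ⟨hfa, hba, P.inj a (by omega) (a + 2) (by omega) (by omega),
          (nonadjE hE hadj).1, (nonadjE hE hadj).2⟩
      exact inclass_vs hE hvs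
  -- Step 9 : the class member orienting the first edge away from `x`
  have hund0 : G.undir x (P.u 1) := by
    have := hApre 0 (by omega)
    rwa [P.hx] at this
  obtain ⟨E₂, hE₂, hE₂0⟩ := hG.2 x (P.u 1) hund0
  have hdag₂ := inclass_dag hE₂
  have hforce : ∀ t, t ≤ a → E₂ (P.u t) (P.u (t + 1)) := by
    intro t
    induction t using Nat.strong_induction_on with
    | _ t ih =>
    intro hta
    rcases Nat.eq_or_lt_of_le (Nat.zero_le t) with h0 | h0
    · rw [← h0]
      have hh : E₂ (P.u 0) (P.u 1) := by
        rw [P.hx]; exact hE₂0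
      exact hh
    · rcases Nat.eq_or_lt_of_le hta with heq | hlt
      · rw [heq]
        exact inclass_dir hE₂ hM12.1
      · -- t < a : the edge is directed forward or undirected
        have hforced : G.dir (P.u t) (P.u (t + 1)) ∨ G.undir (P.u t) (P.u (t + 1)) := by
          rcases lt_or_ge t m with h | h
          · exact Or.inr (hApre t h)
          · exact edge_cases hE (hfwd t h (by omega))
        rcases hforced with hdir | hund
        · exact inclass_dir hE₂ hdir
        · rcases inclass_undir hE₂ hund with hgood | hbad
          · exact hgood
          · exfalso
            have hprev : E₂ (P.u (t - 1)) (P.u t) := by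
              have := ih (t - 1) (by omega) (by omega)
              have e1 : t - 1 + 1 = t := by omega
              rwa [e1] at this
            have hnadj := hchA (t - 1) (t + 1) (by omega) (by omega)
            have hvs : VStruct E₂ (P.u (t - 1)) (P.u t) (P.u (t + 1)) :=
              ⟨hprev, hbad, P.inj (t - 1) (by omega) (t + 1) (by omega) (by omega),
                (nonadjE hE₂ hnadj).1, (nonadjE hE₂ hnadj).2⟩
            exact G.not_mixed _ _ (inclass_vs hE₂ hvs).2 (G.undir_symm hund)
  have htg₂ : Relation.TransGen E₂ x (P.u (a + 1)) := by
    have := tg_of_chain (E := E₂) (u := P.u) (a := 0) (b := a + 1) (by omega)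
      (fun s hs hs' => hforce s (by omega))
    rwa [P.hx] at this
  -- Step 10 : the collider vertex is not in `Z`, hence `l ≥ 1`
  have hcZ : P.u (a + 1) ∉ G.pa x := by
    intro hmem
    exact hdag₂ x (htg₂.tail (inclass_dir hE₂ hmem))
  have hl1 : 1 ≤ l := by
    rcases Nat.eq_or_lt_of_le (Nat.zero_le l) with h0 | h0
    · exfalso
      apply hcZ
      rw [← hw0]
      rw [← h0] at hwZ
      exact hwZ
    · exact h0
  -- Step 11 : no chords into the collider vertex
  have hchC : ∀ i, i + 2 ≤ a + 1 → ¬ G.adj (P.u i) (P.u (a + 1)) := by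
    intro i hi hadj
    rcases adjE hE hadj with hEic | hEci
    · have hL : i = 0 ∨ ActiveTriple E (G.pa x) (P.u (i - 1)) (P.u i) (P.u (a + 1)) := by
        rcases Nat.eq_or_lt_of_le (Nat.zero_le i) with h0 | h0
        · exact Or.inl h0.symm
        · refine Or.inr (at_noncol ?_ (hnonZ i (by omega) (by omega)))
          rintro ⟨-, hc2⟩
          exact dag_asymm hdag hEic hc2
      have hR : a + 1 = P.k ∨
          ActiveTriple E (G.pa x) (P.u i) (P.u (a + 1)) (P.u (a + 2)) :=
        Or.inr (at_col hEic hba hd hrtg)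
      obtain ⟨Q, hQ⟩ := shortcut P hi (by omega) (Or.inl hEic) hL hR
      exact hmin E hE Q hQ
    · rcases le_or_gt m i with him | him
      · -- cycle through the forward run
        have htg : Relation.TransGen E (P.u i) (P.u (a + 1)) :=
          tg_of_chain (E := E) (u := P.u) (by omega)
            (fun s hs hs' => hfwd s (by omega) (by omega))
        exact hdag (P.u i) (htg.tail hEci)
      · have hL : i = 0 ∨ ActiveTriple E (G.pa x) (P.u (i - 1)) (P.u i) (P.u (a + 1)) := by
          rcases Nat.eq_or_lt_of_le (Nat.zero_le i) with h0 | h0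
          · exact Or.inl h0.symm
          · refine Or.inr (at_noncol ?_ (hnonZ i (by omega) (by omega)))
            rintro ⟨hc1, -⟩
            have hbb := hbwd (i - 1) (by omega)
            have e1 : i - 1 + 1 = i := by omega
            rw [e1] at hbb
            exact dag_asymm hdag hbb hc1
        have hR : a + 1 = P.k ∨
            ActiveTriple E (G.pa x) (P.u i) (P.u (a + 1)) (P.u (a + 2)) := by
          refine Or.inr (at_noncol ?_ hcZ)
          rintro ⟨hc1, -⟩
          exact dag_asymm hdag hEci hc1
        obtain ⟨Q, hQ⟩ := shortcut P hi (by omega) (Or.inr hEci) hL hR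
        exact hmin E hE Q hQ
  -- full chordlessness up to the collider vertex
  have hch : ∀ i j, i + 2 ≤ j → j ≤ a + 1 → ¬ G.adj (P.u i) (P.u j) := by
    intro i j hij hja
    rcases Nat.eq_or_lt_of_le hja with hj | hj
    · rw [hj]; exact hchC i (by omega)
    · exact hchA i j hij (by omega)
  -- Step 12 : minimality facts about the descendant path `w`
  have hwBmem : ∀ l' (w' : ℕ → V), w' 0 = P.u (a + 1) →
      (∀ s < l', E (w' s) (w' (s + 1))) → w' l' ∈ G.pa x → Bpred l' :=
    fun l' w' h0 hc hZ =>
      hBnew l' E hE P rfl a ⟨hak, hfa, hba⟩ hfirst w' h0 hc hZ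
  have hwint : ∀ s, 1 ≤ s → s < l → w s ∉ G.pa x := by
    intro s h1 hsl hmem
    exact hlmin s hsl (hwBmem s w hw0 (fun t ht => hwch t (by omega)) hmem)
  have hwnadj : ∀ s, s + 2 ≤ l → ¬ G.adj (w s) (w (s + 2)) := by
    intro s hs hadj
    rcases adjE hE hadj with hf | hb
    · -- splice a shorter descendant path
      refine hlmin (l - 1) (by omega) (hwBmem (l - 1)
        (fun t => if t ≤ s then w t else w (t + 1)) ?_ ?_ ?_)
      · have h0 : (0:ℕ) ≤ s := by omega
        simp [h0, hw0]
      · intro t ht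
        rcases Nat.lt_trichotomy t s with h1 | h1 | h1
        · have e1 : t ≤ s := by omega
          have e2 : t + 1 ≤ s := by omega
          simpa [e1, e2] using hwch t (by omega)
        · subst h1
          have e1 : t ≤ t := le_rfl
          have e2 : ¬ (t + 1 ≤ t) := by omega
          simpa [e1, e2] using hf
        · have e1 : ¬ (t ≤ s) := by omega
          have e2 : ¬ (t + 1 ≤ s) := by omega
          have := hwch (t + 1) (by omega)
          simpa [e1, e2] using this
      · have e1 : ¬ (l - 1 ≤ s) := by omega
        have e2 : l - 1 + 1 = l := by omega
        simp only [e1, if_false, e2]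
        exact hwZ
    · -- a backward chord is a cycle in `E`
      have : Relation.TransGen E (w s) (w (s + 2)) :=
        Relation.TransGen.head (hwch s (by omega))
          (Relation.TransGen.single (hwch (s + 1) (by omega)))
      exact hdag (w s) (this.tail hb)
  -- Step 13 : cascade in E₂ along the descendant path, or the escape configuration
  have hE1 : E (P.u (a + 1)) (w 1) := by
    have := hwch 0 (by omega)
    rwa [hw0] at this
  by_cases hf1 : E₂ (P.u (a + 1)) (w 1)
  · -- cascade : E₂ orients the whole descendant path forward, giving a cycle
    have hwc₂ : ∀ s, s < l → E₂ (w s) (w (s + 1)) := by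
      intro s
      induction s using Nat.strong_induction_on with
      | _ s ih =>
      intro hsl
      rcases Nat.eq_or_lt_of_le (Nat.zero_le s) with h0 | h0
      · rw [← h0]
        have hh : E₂ (w 0) (w 1) := by rw [hw0]; exact hf1
        exact hh
      · rcases edge_cases hE (hwch s hsl) with hdir | hund
        · exact inclass_dir hE₂ hdir
        · rcases inclass_undir hE₂ hund with hgood | hbad
          · exact hgood
          · exfalso
            have hprev : E₂ (w (s - 1)) (w s) := by
              have := ih (s - 1) (by omega) (by omega)
              have e1 : s - 1 + 1 = s := by omega
              rwa [e1] at this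
            have hnadj : ¬ G.adj (w (s - 1)) (w (s + 1)) := by
              have := hwnadj (s - 1) (by omega)
              have e1 : s - 1 + 2 = s + 1 := by omega
              rwa [e1] at this
            have hne : w (s - 1) ≠ w (s + 1) := by
              intro hcon
              have h1 := hwch (s - 1) (by omega)
              have e1 : s - 1 + 1 = s := by omega
              rw [e1] at h1
              have h2 := hwch s hsl
              rw [← hcon] at h2
              exact dag_asymm hdag h1 h2
            have hvs : VStruct E₂ (w (s - 1)) (w s) (w (s + 1)) :=
              ⟨hprev, hbad, hne, (nonadjE hE₂ hnadj).1, (nonadjE hE₂ hnadj).2⟩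
            exact G.not_mixed _ _ (inclass_vs hE₂ hvs).2 (G.undir_symm hund)
    have htgw : Relation.TransGen E₂ (w 0) (w l) :=
      tg_of_chain (E := E₂) (u := w) (by omega) (fun s hs hs' => hwc₂ s hs')
    rw [hw0] at htgw
    exact hdag₂ x ((htg₂.trans htgw).tail (inclass_dir hE₂ hwZ))
  · -- escape configuration
    have hund1 : G.undir (P.u (a + 1)) (w 1) := by
      rcases edge_cases hE hE1 with hdir | hund
      · exact absurd (inclass_dir hE₂ hdir) hf1
      · exact hund
    have hb1 : E₂ (w 1) (P.u (a + 1)) := by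
      rcases inclass_undir hE₂ hund1 with h | h
      · exact absurd h hf1
      · exact h
    have hne_aw : P.u a ≠ w 1 := by
      intro hcon
      rw [hcon] at hfa
      exact dag_asymm hdag hE1 hfa
    have hadj1 : G.adj (P.u a) (w 1) := by
      by_contra hnadj
      have hvs : VStruct E₂ (P.u a) (P.u (a + 1)) (w 1) :=
        ⟨hforce a le_rfl, hb1, hne_aw, (nonadjE hE₂ hnadj).1, (nonadjE hE₂ hnadj).2⟩
      exact G.not_mixed _ _ (inclass_vs hE₂ hvs).2 (G.undir_symm hund1)
    have hne_cw : P.u (a + 2) ≠ w 1 := by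
      intro hcon
      rw [hcon] at hba
      exact dag_asymm hdag hE1 hba
    have hadj2 : G.adj (P.u (a + 2)) (w 1) := by
      by_contra hnadj
      have hvs : VStruct E₂ (P.u (a + 2)) (P.u (a + 1)) (w 1) :=
        ⟨inclass_dir hE₂ hM12.2, hb1, hne_cw, (nonadjE hE₂ hnadj).1, (nonadjE hE₂ hnadj).2⟩
      exact G.not_mixed _ _ (inclass_vs hE₂ hvs).2 (G.undir_symm hund1)
    have hE_aw : E (P.u a) (w 1) := by
      rcases adjE hE hadj1 with h | h
      · exact h
      · exact absurd h (fun h' => hdag (P.u a)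
          ((Relation.TransGen.head hfa (Relation.TransGen.single hE1)).tail h'))
    have hE_cw : E (P.u (a + 2)) (w 1) := by
      rcases adjE hE hadj2 with h | h
      · exact h
      · exact absurd h (fun h' => hdag (P.u (a + 1))
          ((Relation.TransGen.head hE1 (Relation.TransGen.single h')).tail hba))
    have hrtg1 : Relation.ReflTransGen E (w 1) (w l) :=
      rtg_of_chain (E := E) (u := w) hl1 (fun s hs hs' => hwch s hs')
    -- `w 1` does not lie on the path
    have hfresh : ∀ t ≤ P.k, P.u t ≠ w 1 := by
      intro t htk hcon
      rcases Nat.lt_or_ge t (a + 3) with ht3 | ht3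
      · rcases (by omega : t + 2 ≤ a + 1 ∨ t = a ∨ t = a + 1 ∨ t = a + 2) with h | h | h | h
        · have h5 : E (P.u (a + 1)) (P.u t) := by rw [hcon]; exact hE1
          exact hch t (a + 1) h le_rfl (adj_symm (inclass_adj hE h5))
        · exact hne_aw (h ▸ hcon)
        · have hcon' : P.u (a + 1) = w 1 := h ▸ hcon
          have h5 := hE1
          rw [← hcon'] at h5
          exact dag_irrefl hdag _ h5
        · exact hne_cw (h ▸ hcon)
      · -- t ≥ a + 3 : chord from `a` to `t`
        have hEat : E (P.u a) (P.u t) := by rw [hcon]; exact hE_aw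
        have hL : a = 0 ∨
            ActiveTriple E (G.pa x) (P.u (a - 1)) (P.u a) (P.u t) := by
          right
          refine at_noncol ?_ (hnonZ a (by omega) le_rfl)
          rintro ⟨-, hc2⟩
          exact dag_asymm hdag hEat hc2
        have hR : t = P.k ∨ ActiveTriple E (G.pa x) (P.u a) (P.u t) (P.u (t + 1)) := by
          rcases Nat.eq_or_lt_of_le htk with h | h
          · exact Or.inl h
          · right
            by_cases hcol' : E (P.u (t + 1)) (P.u t)
            · refine at_col hEat hcol' hwZ ?_
              rw [hcon]; exact hrtg1
            · refine at_noncol (fun hcc => hcol' hcc.2) ?_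
              intro hmem
              exact hcol' (z_mem_col P (by omega) (by omega) hmem).2
        obtain ⟨Q, hQ⟩ := shortcut P (by omega : a + 2 ≤ t) (by omega) (Or.inl hEat) hL hR
        exact hmin E hE Q hQ
    -- the replacement path
    have ec1 : a + 1 - 1 = a := by omega
    have ec2 : a + 1 - 2 = a - 1 := by omega
    have e3 : a + 1 + 1 = a + 2 := by omega
    have e4 : a + 1 + 2 = a + 3 := by omega
    have hstepl : SkelStep E (P.u (a + 1 - 1)) (w 1) := by
      rw [ec1]; exact Or.inl hE_aw
    have hstepr : SkelStep E (w 1) (P.u (a + 1 + 1)) := by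
      rw [e3]; exact Or.inr hE_cw
    have hncZ2 : a + 3 ≤ P.k → P.u (a + 2) ∉ G.pa x := by
      intro h3
      have hact := (P.act (a + 1) (by omega)).2
      apply hact
      rintro ⟨hc1, -⟩
      exact dag_asymm hdag hba hc1
    have hAterm : 2 ≤ a + 1 →
        ActiveTriple E (G.pa x) (P.u (a + 1 - 2)) (P.u (a + 1 - 1)) (w 1) := by
      intro _
      rw [ec2, ec1]
      refine at_noncol ?_ (hnonZ a (by omega) le_rfl)
      rintro ⟨-, hc2⟩
      exact dag_asymm hdag hE_aw hc2
    have hBterm : ActiveTriple E (G.pa x) (P.u (a + 1 - 1)) (w 1) (P.u (a + 1 + 1)) := by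
      rw [ec1, e3]
      exact at_col hE_aw hE_cw hwZ hrtg1
    have hCterm : a + 1 + 2 ≤ P.k →
        ActiveTriple E (G.pa x) (w 1) (P.u (a + 1 + 1)) (P.u (a + 1 + 2)) := by
      intro h5
      rw [e3, e4]
      refine at_noncol ?_ (hncZ2 (by omega))
      rintro ⟨hc1, -⟩
      exact dag_asymm hdag hE_cw hc1
    obtain ⟨Q, hQk, hQu⟩ := replace_mid P (by omega : 1 ≤ a + 1) (by omega : a + 1 + 1 ≤ P.k)
      (w 1) hfresh hstepl hstepr hAterm hBterm hCterm
    -- the new path is a witness with a strictly shorter descendant path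
    apply hlmin (l - 1) (by omega)
    refine hBnew (l - 1) E hE Q hQk a ?_ ?_ (fun s => w (s + 1)) ?_ ?_ ?_
    · refine ⟨by rw [hQk]; omega, ?_, ?_⟩
      · rw [hQu a, hQu (a + 1), if_neg (by omega : ¬ a = a + 1), if_pos rfl]
        exact hE_aw
      · rw [hQu (a + 2), hQu (a + 1), if_neg (by omega : ¬ a + 2 = a + 1), if_pos rfl]
        exact hE_cw
    · intro s hs hCols
      obtain ⟨hs2, hc1, hc2⟩ := hCols
      rw [hQk] at hs2
      rcases Nat.lt_or_ge (s + 2) (a + 1) with h1 | h1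
      · apply hfirst s hs
        refine ⟨by omega, ?_, ?_⟩
        · rw [hQu s, hQu (s + 1)] at hc1
          rwa [if_neg (by omega), if_neg (by omega)] at hc1
        · rw [hQu (s + 2), hQu (s + 1)] at hc2
          rwa [if_neg (by omega), if_neg (by omega)] at hc2
      · have hseq : s + 2 = a + 1 := by omega
        rw [hQu (s + 2), hQu (s + 1)] at hc2
        rw [if_pos hseq, if_neg (by omega)] at hc2
        have e5 : s + 1 = a := by omega
        rw [e5] at hc2
        exact dag_asymm hdag hE_aw hc2
    · rw [hQu (a + 1), if_pos rfl]
    · intro s hsl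
      exact hwch (s + 1) (by omega)
    · show w (l - 1 + 1) ∈ G.pa x
      have e5 : l - 1 + 1 = l := by omega
      rw [e5]
      exact hwZ

end Stmt10Aux
end AuxProof7

section AuxProof8
open Relation
variable {G : PDGraph V} {E : V → V → Prop} {Z : Set V} {x y : V}
namespace Stmt10Aux

lemma monster (hG : IsCPDAG G) (hxy : x ≠ y) (hyZ : y ∉ G.pa x)
    (hQC : ¬ Nonempty (CPD G x y))
    (hex : ∃ E, InClass G E ∧ Nonempty (APath E (G.pa x) x y)) : False := by
  classical
  have hnt : ∀ E', InClass G E' → ¬ Relation.TransGen E' x y := fun E' hE' htg =>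
    hQC (cpd_of_tg hE' htg)
  have hexn : ∃ n, ∃ E', InClass G E' ∧ ∃ P : APath E' (G.pa x) x y, P.k = n := by
    obtain ⟨E, hE, ⟨P⟩⟩ := hex
    exact ⟨P.k, E, hE, P, rfl⟩
  set N := Nat.find hexn with hN
  obtain ⟨E₀, hE₀, P₀, hP₀⟩ := Nat.find_spec hexn
  have hminN : ∀ (E' : V → V → Prop), InClass G E' →
      ∀ Q : APath E' (G.pa x) x y, ¬ Q.k < N := by
    intro E' hE' Q hQ
    exact Nat.find_min hexn hQ ⟨E', hE', Q, rfl⟩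
  set Bpred : ℕ → Prop := fun l => ∃ E', InClass G E' ∧ ∃ P : APath E' (G.pa x) x y,
    P.k = N ∧ ∃ a, Col P a ∧ (∀ s < a, ¬ Col P s) ∧
      ∃ w : ℕ → V, w 0 = P.u (a + 1) ∧ (∀ s < l, E' (w s) (w (s + 1))) ∧ w l ∈ G.pa x
    with hBdef
  by_cases hBex : ∃ l, Bpred l
  · obtain ⟨E₁, hE₁, P₁, hP₁k, a, hcola, hfirst, w, hw0, hwch, hwZ⟩ := Nat.find_spec hBex
    refine col_case hG hE₁ P₁ hnt ?_ hcola hfirst hw0 hwch hwZ Bpred ?_ ?_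
    · intro E' hE' Q hQ
      rw [hP₁k] at hQ
      exact hminN E' hE' Q hQ
    · intro l' E' hE' P' hP'k a' hc' hf' w' h0' hch' hZ'
      exact ⟨E', hE', P', by rw [hP'k, hP₁k], a', hc', hf', w', h0', hch', hZ'⟩
    · intro l' hl'
      exact Nat.find_min hBex hl'
  · push_neg at hBex
    refine cf_case hG hE₀ P₀ hyZ hQC hnt ?_ ?_
    · intro E' hE' Q hQ
      rw [hP₀] at hQ
      exact hminN E' hE' Q hQ
    · intro t hcol
      have hexc : ∃ s, Col P₀ s := ⟨t, hcol⟩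
      have hcolc := Nat.find_spec hexc
      have hfir : ∀ s < Nat.find hexc, ¬ Col P₀ s := fun s hs => Nat.find_min hexc hs
      obtain ⟨d, hd, hrtg⟩ := (P₀.act (Nat.find hexc) hcolc.1).1 ⟨hcolc.2.1, hcolc.2.2⟩
      obtain ⟨n, w, hw0, hwn, hwch⟩ := chain_of_rtg hrtg
      exact hBex n ⟨E₀, hE₀, P₀, hP₀, Nat.find hexc, hcolc, hfir, w, hw0, hwch,
        by rw [hwn]; exact hd⟩

end Stmt10Aux
end AuxProof8

/-- `x` is a definite non-cause of `y` iff `x ⟂ y | pa(x, G*)` holds in some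
(equivalently, every) DAG of the equivalence class. -/
theorem stmt10 (G : PDGraph V) (hG : IsCPDAG G) (x y : V) (hxy : x ≠ y) :
    (DefiniteNonCause G x y ↔ ∃ E, InClass G E ∧ DSep E (G.pa x) x y) ∧
    (DefiniteNonCause G x y ↔ ∀ E, InClass G E → DSep E (G.pa x) x y) := by
  classical
  obtain ⟨E₀, hE₀⟩ := hG.1
  have keyA : DefiniteNonCause G x y → ∀ E, InClass G E → DSep E (G.pa x) x y := by
    intro hdnc E hE hconn
    obtain ⟨_, hyZ, hP⟩ := Stmt10Aux.apath_of_dconn hxy hconn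
    have hQC : ¬ Nonempty (Stmt10Aux.CPD G x y) := by
      rintro ⟨P⟩
      obtain ⟨E', hE', htg⟩ := Stmt10Aux.tg_of_cpd hG P
      exact hdnc E' hE' htg
    exact Stmt10Aux.monster hG hxy hyZ hQC ⟨E, hE, hP⟩
  have keyB : ∀ E₁, InClass G E₁ → Relation.TransGen E₁ x y →
      ∀ E, InClass G E → DConn E (G.pa x) x y := by
    intro E₁ hE₁ htg E hE
    obtain ⟨P⟩ := Stmt10Aux.cpd_of_tg hE₁ htg
    exact Stmt10Aux.dconn_of_cpd P hE
  constructor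
  · constructor
    · intro hdnc
      exact ⟨E₀, hE₀, keyA hdnc E₀ hE₀⟩
    · rintro ⟨E₁, hE₁, hsep⟩ E hE htg
      exact hsep (keyB E hE htg E₁ hE₁)
  · constructor
    · exact keyA
    · intro hall E hE htg
      exact (hall E₀ hE₀) (keyB E hE htg E₀ hE₀)
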